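/- arXiv:1310.2001 — 3 statements merged into one kernel-verified Lean document; each statement's English description precedes it below -/
import Mathlib

section
/- Let X be a random variable on a countable set 𝒳 with distribution P, let φ be an injective map from 𝒳 into nonempty strings over a size-K alphabet with prefix-free image, let α_c be the cost capacity, and let η > 0 be a threshold. Then for any z > 0, Pr[c(φ(X)) > η] ≥ Pr[P(X) ≤ z·K^{-α_c η}] − z. -/
/-- Additive cost of a string over the code alphabet. -/
noncomputable def strCost {U : Type*} (c : U → ℝ) (s : List U) : ℝ := (s.map c).sum

/-- Probability of a set under a (real-valued) distribution. -/
noncomputable def prob {X : Type*} (P : X → ℝ) (S : Set X) : ℝ := ∑' x, S.indicator P x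

open Finset in
lemma kraft_aux {U : Type*} [Fintype U] [DecidableEq U] (w : U → ℝ) (hw0 : ∀ u, 0 ≤ w u)
    (hw1 : ∑ u, w u = 1) :
    ∀ n (S : Finset (List U)),
      (∑ s ∈ S, s.length ≤ n) →
      (∀ s ∈ S, ∀ t ∈ S, s <+: t → s = t) →
      ∑ s ∈ S, (s.map w).prod ≤ 1 := by
  have hprodnn : ∀ s : List U, 0 ≤ (s.map w).prod := by
    intro s
    apply List.prod_nonneg
    intro a ha
    obtain ⟨u, _, rfl⟩ := List.mem_map.mp ha
    exact hw0 u
  intro n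
  induction n with
  | zero =>
      intro S hlen hpf
      have hsub : S ⊆ {[]} := by
        intro s hs
        have h0 : s.length = 0 :=
          Nat.le_zero.mp (le_trans (Finset.single_le_sum (fun i _ => Nat.zero_le _) hs) hlen)
        simp [List.length_eq_zero_iff.mp h0]
      calc ∑ s ∈ S, (s.map w).prod
          ≤ ∑ s ∈ ({[]} : Finset (List U)), (s.map w).prod :=
            Finset.sum_le_sum_of_subset_of_nonneg hsub (fun s _ _ => hprodnn s)
        _ = 1 := by simp
  | succ n ih =>
      intro S hlen hpf
      by_cases hnil : ([] : List U) ∈ S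
      · have hsub : S ⊆ {[]} := by
          intro t ht
          have := hpf [] hnil t ht List.nil_prefix
          simp [← this]
        calc ∑ s ∈ S, (s.map w).prod
            ≤ ∑ s ∈ ({[]} : Finset (List U)), (s.map w).prod :=
              Finset.sum_le_sum_of_subset_of_nonneg hsub (fun s _ _ => hprodnn s)
          _ = 1 := by simp
      · have hfib := Finset.sum_fiberwise S (fun s => s.head?) (fun s => (s.map w).prod)
        rw [← hfib]
        have hnone : S.filter (fun s => s.head? = none) = ∅ := by
          rw [Finset.filter_eq_empty_iff]
          intro s hs hcon
          exact hnil (by rwa [List.head?_eq_none_iff.mp hcon] at hs)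
        have hbound : ∀ u : U,
            ∑ s ∈ S.filter (fun s => s.head? = some u), (s.map w).prod ≤ w u := by
          intro u
          set F := S.filter (fun s => s.head? = some u) with hF
          have hcons : ∀ s ∈ F, s = u :: s.tail := by
            intro s hs
            rw [hF, Finset.mem_filter] at hs
            cases s with
            | nil => simp at hs
            | cons a t => simp at hs; simp [hs.2]
          set T := F.image List.tail with hT
          have htinj : ∀ s₁ ∈ F, ∀ s₂ ∈ F, s₁.tail = s₂.tail → s₁ = s₂ := by
            intro s₁ h₁ s₂ h₂ h
            rw [hcons s₁ h₁, hcons s₂ h₂, h]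
          have hsum1 : ∑ s ∈ F, (s.map w).prod = w u * ∑ t ∈ T, (t.map w).prod := by
            rw [hT, Finset.sum_image htinj, Finset.mul_sum]
            apply Finset.sum_congr rfl
            intro s hs
            conv_lhs => rw [hcons s hs]
            simp
          rw [hsum1]
          have hTle : ∑ t ∈ T, (t.map w).prod ≤ 1 := by
            rcases Finset.eq_empty_or_nonempty T with hTe | hTne
            · simp [hTe]
            · apply ih T
              · -- length bound
                have hFs : ∑ s ∈ F, s.length ≤ n + 1 :=
                  le_trans (Finset.sum_le_sum_of_subset (Finset.filter_subset _ _)) hlen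
                have hFsum : ∑ s ∈ F, s.length = (∑ t ∈ T, t.length) + F.card := by
                  rw [hT, Finset.sum_image htinj, Finset.card_eq_sum_ones F, ← Finset.sum_add_distrib]
                  apply Finset.sum_congr rfl
                  intro s hs
                  conv_lhs => rw [hcons s hs]
                  simp
                have hFcard : 1 ≤ F.card := by
                  obtain ⟨t, ht⟩ := hTne
                  rw [hT, Finset.mem_image] at ht
                  obtain ⟨s, hs, _⟩ := ht
                  exact Finset.card_pos.mpr ⟨s, hs⟩
                omega
              · intro t₁ h₁ t₂ h₂ hpre
                rw [hT, Finset.mem_image] at h₁ h₂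
                obtain ⟨s₁, hs₁, rfl⟩ := h₁
                obtain ⟨s₂, hs₂, rfl⟩ := h₂
                have hp2 : s₁ <+: s₂ := by
                  rw [hcons s₁ hs₁, hcons s₂ hs₂]
                  exact List.cons_prefix_cons.mpr ⟨rfl, hpre⟩
                have := hpf s₁ (Finset.mem_of_mem_filter _ hs₁) s₂ (Finset.mem_of_mem_filter _ hs₂) hp2
                rw [this]
            
          calc w u * ∑ t ∈ T, (t.map w).prod ≤ w u * 1 := by
                apply mul_le_mul_of_nonneg_left hTle (hw0 u)
            _ = w u := mul_one _
        calc ∑ o : Option U, ∑ s ∈ S.filter (fun s => s.head? = o), (s.map w).prod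
            = ∑ u : U, ∑ s ∈ S.filter (fun s => s.head? = some u), (s.map w).prod := by
              rw [Fintype.sum_option (fun o => ∑ s ∈ S.filter (fun s => s.head? = o), (s.map w).prod)]
              have hnone' : S.filter (fun s => s = []) = ∅ := by
                rw [Finset.filter_eq_empty_iff]
                intro s hs h
                exact hnil (h ▸ hs)
              simp [hnone, hnone']
          _ ≤ ∑ u : U, w u := Finset.sum_le_sum (fun u _ => hbound u)
          _ = 1 := hw1

lemma weight_eq {U : Type*} (K : ℕ) (hK : 2 ≤ K) (c : U → ℝ) (α : ℝ) (s : List U) :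
    (s.map (fun u => (K : ℝ) ^ (-(α * c u)))).prod = (K : ℝ) ^ (-(α * strCost c s)) := by
  have hKpos : (0 : ℝ) < K := by positivity
  induction s with
  | nil => simp [strCost]
  | cons a t iht =>
      have : strCost c (a :: t) = c a + strCost c t := by simp [strCost]
      rw [List.map_cons, List.prod_cons, iht, this, ← Real.rpow_add hKpos]
      ring_nf

/-- Converse bound (Lemma 2): overflow probability of any prefix-free code is lower
bounded by the information-spectrum tail probability minus `z`. -/
theorem overflow_converse_bound {U X : Type*} [Fintype U] [Countable X]
    (K : ℕ) (hK : 2 ≤ K) (hcard : Fintype.card U = K)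
    (c : U → ℝ) (hc : ∀ u, 0 < c u)
    (α : ℝ) (hα : 0 < α) (hroot : ∑ u : U, (K : ℝ) ^ (-(α * c u)) = 1)
    (P : X → ℝ) (hP0 : ∀ x, 0 ≤ P x) (hP1 : HasSum P 1)
    (φ : X → List U) (hinj : Function.Injective φ) (hne : ∀ x, φ x ≠ [])
    (hpf : ∀ x y, φ x <+: φ y → φ x = φ y)
    (η : ℝ) (hη : 0 < η) (z : ℝ) (hz : 0 < z) :
    prob P {x | P x ≤ z * (K : ℝ) ^ (-(α * η))} - z ≤ prob P {x | η < strCost c (φ x)} := by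
  classical
  have hK1 : (1 : ℝ) < K := by exact_mod_cast lt_of_lt_of_le one_lt_two (by exact_mod_cast hK)
  set A := {x | P x ≤ z * (K : ℝ) ^ (-(α * η))} with hA
  set B := {x | η < strCost c (φ x)} with hB
  have hPsum : Summable P := hP1.summable
  have hsummInd : ∀ S : Set X, Summable (S.indicator P) := fun S => hPsum.indicator S
  -- split prob A
  have hsplit : prob P A = prob P (A ∩ B) + prob P (A \ B) := by
    unfold prob
    rw [← Summable.tsum_add (hsummInd _) (hsummInd _)]
    apply tsum_congr
    intro x
    by_cases hx : x ∈ A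
    · by_cases hxb : x ∈ B
      · simp [Set.indicator, hx, hxb, Set.mem_inter_iff, Set.mem_diff]
      · simp [Set.indicator, hx, hxb, Set.mem_inter_iff, Set.mem_diff]
    · simp [Set.indicator, hx, Set.mem_inter_iff, Set.mem_diff]
  have h1 : prob P (A ∩ B) ≤ prob P B := by
    apply Summable.tsum_le_tsum _ (hsummInd _) (hsummInd _)
    exact Set.indicator_le_indicator_of_subset Set.inter_subset_right hP0
  have h2 : prob P (A \ B) ≤ z := by
    apply Summable.tsum_le_of_sum_le (hsummInd _)
    intro F
    have key : ∀ x ∈ F.filter (fun x => x ∈ A \ B),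
        P x ≤ z * (K : ℝ) ^ (-(α * strCost c (φ x))) := by
      intro x hx
      rw [Finset.mem_filter] at hx
      obtain ⟨-, hxA, hxB⟩ := hx
      have hle : strCost c (φ x) ≤ η := le_of_not_gt hxB
      have hmono : (K : ℝ) ^ (-(α * η)) ≤ (K : ℝ) ^ (-(α * strCost c (φ x))) := by
        apply Real.rpow_le_rpow_left_iff hK1 |>.mpr
        nlinarith
      calc P x ≤ z * (K : ℝ) ^ (-(α * η)) := hxA
        _ ≤ z * (K : ℝ) ^ (-(α * strCost c (φ x))) := by
            exact mul_le_mul_of_nonneg_left hmono (le_of_lt hz)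
    have heq : ∑ x ∈ F, (A \ B).indicator P x
        = ∑ x ∈ F.filter (fun x => x ∈ A \ B), P x := by
      rw [Finset.sum_filter]
      apply Finset.sum_congr rfl
      intro x _
      by_cases hx : x ∈ A \ B <;> simp [Set.indicator, hx]
    rw [heq]
    set F' := F.filter (fun x => x ∈ A \ B) with hF'
    have hw0 : ∀ u, (0:ℝ) ≤ (K : ℝ) ^ (-(α * c u)) := fun u => Real.rpow_nonneg (by positivity) _
    have hkraft : ∑ x ∈ F', (K : ℝ) ^ (-(α * strCost c (φ x))) ≤ 1 := by
      have himg : ∑ x ∈ F', (K : ℝ) ^ (-(α * strCost c (φ x)))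
          = ∑ s ∈ F'.image φ, ((s.map (fun u => (K : ℝ) ^ (-(α * c u)))).prod) := by
        rw [Finset.sum_image (fun x _ y _ h => hinj h)]
        apply Finset.sum_congr rfl
        intro x _
        rw [weight_eq K hK]
      rw [himg]
      apply kraft_aux _ hw0 hroot (∑ s ∈ F'.image φ, s.length) _ le_rfl
      intro s hs t ht hpre
      rw [Finset.mem_image] at hs ht
      obtain ⟨x, _, rfl⟩ := hs
      obtain ⟨y, _, rfl⟩ := ht
      exact hpf x y hpre
    calc ∑ x ∈ F', P x ≤ ∑ x ∈ F', z * (K : ℝ) ^ (-(α * strCost c (φ x))) :=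
          Finset.sum_le_sum key
      _ = z * ∑ x ∈ F', (K : ℝ) ^ (-(α * strCost c (φ x))) := by rw [Finset.mul_sum]
      _ ≤ z * 1 := mul_le_mul_of_nonneg_left hkraft (le_of_lt hz)
      _ = z := mul_one z
  have : prob P A ≤ prob P B + z := by
    rw [hsplit]
    linarith
  linarith
end

section
/- Suppose {η_n} is a sequence of ε-achievable overflow thresholds for the general source X under a cost function with cost capacity α_c: there exist prefix-free variable-length encoders φ_n with limsup_{n→∞} Pr[c(φ_n(X^n)) > η_n] ≤ ε. Then {α_c η_n} is a sequence of ε-achievable fixed-length coding lengths: there exist fixed-length codes (n, M_n, ε_n^f) with limsup_{n→∞} ε_n^f ≤ ε and limsup_{n→∞} (log_K M_n − α_c η_n) ≤ 0. -/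
open Finset in
lemma kraft_aux_s5 {U : Type*} [Fintype U] [Inhabited U] (q : U → ℝ) (hq : ∀ u, 0 ≤ q u)
    (hsum : ∑ u, q u = 1) :
    ∀ N (W : Finset (List U)), (∑ w ∈ W, w.length ≤ N) →
      (∀ w ∈ W, ∀ v ∈ W, w <+: v → w = v) → ∑ w ∈ W, (w.map q).prod ≤ 1 := by
  classical
  intro N
  induction N with
  | zero =>
    intro W hlen hpf
    have h : ∀ w ∈ W, w = ([] : List U) := by
      intro w hw
      have h0 : w.length ≤ 0 :=
        le_trans (Finset.single_le_sum (f := fun w : List U => w.length) (fun _ _ => Nat.zero_le _) hw) hlen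
      have : w.length = 0 := Nat.le_zero.mp h0
      exact List.length_eq_zero_iff.mp this
    rcases W.eq_empty_or_nonempty with rfl | ⟨w0, hw0⟩
    · simp
    · have hW : W = {[]} := by
        apply Finset.eq_singleton_iff_unique_mem.mpr
        exact ⟨h w0 hw0 ▸ hw0, fun x hx => h x hx⟩
      simp [hW]
  | succ N ih =>
    intro W hlen hpf
    by_cases hnil : ([] : List U) ∈ W
    · have hW : W = {[]} := Finset.eq_singleton_iff_unique_mem.mpr
        ⟨hnil, fun x hx => (hpf _ hnil _ hx List.nil_prefix).symm⟩
      simp [hW]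
    -- all words nonempty
    have hne : ∀ w ∈ W, w ≠ ([] : List U) := fun w hw h => hnil (h ▸ hw)
    rw [← Finset.sum_fiberwise W (fun w => w.headI) (fun w => (w.map q).prod)]
    calc ∑ u : U, ∑ w ∈ W.filter (fun w => w.headI = u), (w.map q).prod
        ≤ ∑ u : U, q u * 1 := by
          apply Finset.sum_le_sum
          intro u _
          set F := W.filter (fun w => w.headI = u) with hF
          have hmem : ∀ w ∈ F, w = u :: w.tail := by
            intro w hw
            rw [Finset.mem_filter] at hw
            obtain ⟨hwW, hwh⟩ := hw
            obtain ⟨a, t, rfl⟩ := List.exists_cons_of_ne_nil (hne w hwW)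
            simp at hwh
            simp [hwh]
          have hsplit : ∑ w ∈ F, (w.map q).prod = q u * ∑ w ∈ F, ((w.tail.map q).prod) := by
            rw [Finset.mul_sum]
            apply Finset.sum_congr rfl
            intro w hw
            conv_lhs => rw [hmem w hw]
            simp
          rw [hsplit]
          apply mul_le_mul_of_nonneg_left _ (hq u)
          have hinj : Set.InjOn List.tail (F : Set (List U)) := by
            intro a ha b hb h
            rw [hmem a ha, hmem b hb, h]
          rw [← Finset.sum_image (f := fun t : List U => (t.map q).prod)
            (fun a ha b hb h => hinj ha hb h)]
          apply ih
          · -- length bound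
            have h1 : ∑ t ∈ F.image List.tail, t.length = ∑ w ∈ F, w.tail.length :=
              Finset.sum_image (fun a ha b hb h => hinj ha hb h)
            rw [h1]
            rcases F.eq_empty_or_nonempty with hFe | ⟨w0, hw0⟩
            · simp [hFe]
            · have hF1 : ∀ w ∈ F, 1 ≤ w.length := by
                intro w hw
                have := hmem w hw
                rw [this]; simp
              have h2 : ∑ w ∈ F, w.tail.length + F.card = ∑ w ∈ F, w.length := by
                rw [Finset.card_eq_sum_ones, ← Finset.sum_add_distrib]
                apply Finset.sum_congr rfl
                intro w hw
                have := hF1 w hw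
                simp [List.length_tail]
                omega
              have h3 : ∑ w ∈ F, w.length ≤ ∑ w ∈ W, w.length :=
                Finset.sum_le_sum_of_subset (Finset.filter_subset _ _)
              have h4 : 1 ≤ F.card := Finset.card_pos.mpr ⟨w0, hw0⟩
              omega
          · -- prefix-free
            intro w hw v hv hpre
            rw [Finset.mem_image] at hw hv
            obtain ⟨a, ha, rfl⟩ := hw
            obtain ⟨b, hb, rfl⟩ := hv
            have : a <+: b := by
              rw [hmem a ha, hmem b hb]
              exact List.cons_prefix_cons.mpr ⟨rfl, hpre⟩
            have := hpf a (Finset.mem_filter.mp ha).1 b (Finset.mem_filter.mp hb).1 this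
            rw [this]
      _ = 1 := by simp [hsum]

lemma prod_map_rpow {U : Type*} (K : ℕ) (hK : 0 < (K:ℝ)) (α : ℝ) (c : U → ℝ) :
    ∀ s : List U, ((s.map fun u => (K:ℝ) ^ (-(α * c u))).prod) = (K:ℝ) ^ (-(α * strCost c s)) := by
  intro s
  induction s with
  | nil => simp [strCost]
  | cons a t ih =>
    simp only [List.map_cons, List.prod_cons, ih, strCost, List.map_cons, List.sum_cons]
    rw [← Real.rpow_add hK]
    ring_nf

lemma exists_code {U : Type*} [Fintype U] [Nonempty U] [Inhabited U] (K : ℕ) (hK : 2 ≤ K)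
    (c : U → ℝ) (α η : ℝ) (hα : 0 ≤ α) (hαη : 0 ≤ α * η)
    (hroot : ∑ u : U, (K : ℝ) ^ (-(α * c u)) = 1)
    {X : Type} [Nonempty X] (φ : X → List U) (hinj : Function.Injective φ)
    (hpf : ∀ x y, φ x <+: φ y → φ x = φ y) :
    ∃ (M : ℕ) (f : X → Fin M) (g : Fin M → X), 1 ≤ M ∧
      (∀ x, strCost c (φ x) ≤ η → g (f x) = x) ∧ (M : ℝ) ≤ (K : ℝ) ^ (α * η) := by
  classical
  have hK0 : (0:ℝ) < K := by positivity
  have hK1 : (1:ℝ) < K := by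
    have : (1:ℕ) < K := lt_of_lt_of_le one_lt_two hK
    exact_mod_cast this
  set q : U → ℝ := fun u => (K:ℝ) ^ (-(α * c u)) with hqdef
  have hq : ∀ u, 0 ≤ q u := fun u => Real.rpow_nonneg hK0.le _
  set S : Set X := {x | strCost c (φ x) ≤ η} with hSdef
  have hbound : ∀ T : Finset X, ↑T ⊆ S → (T.card : ℝ) ≤ (K:ℝ) ^ (α * η) := by
    intro T hT
    set T' := T.image φ with hT'
    have hcard' : T'.card = T.card := Finset.card_image_of_injective T hinj
    have hpf' : ∀ w ∈ T', ∀ v ∈ T', w <+: v → w = v := by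
      intro w hw v hv hpre
      rw [Finset.mem_image] at hw hv
      obtain ⟨x, hx, rfl⟩ := hw
      obtain ⟨y, hy, rfl⟩ := hv
      exact hpf x y hpre
    have hkraft := kraft_aux_s5 q hq hroot (∑ w ∈ T', w.length) T' le_rfl hpf'
    have hterm : ∀ w ∈ T', (K:ℝ) ^ (-(α * η)) ≤ (w.map q).prod := by
      intro w hw
      rw [Finset.mem_image] at hw
      obtain ⟨x, hx, rfl⟩ := hw
      rw [hqdef, prod_map_rpow K hK0]
      apply (Real.rpow_le_rpow_left_iff hK1).mpr
      have hxS : strCost c (φ x) ≤ η := hT hx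
      have := mul_le_mul_of_nonneg_left hxS hα
      linarith
    have hsum_ge : (T'.card : ℝ) * (K:ℝ) ^ (-(α * η)) ≤ ∑ w ∈ T', (w.map q).prod := by
      calc (T'.card : ℝ) * (K:ℝ) ^ (-(α * η)) = ∑ _w ∈ T', (K:ℝ) ^ (-(α * η)) := by
            rw [Finset.sum_const, nsmul_eq_mul]
        _ ≤ _ := Finset.sum_le_sum hterm
    have hle1 : (T'.card : ℝ) * (K:ℝ) ^ (-(α * η)) ≤ 1 := le_trans hsum_ge hkraft
    have hpos : (0:ℝ) < (K:ℝ) ^ (α * η) := Real.rpow_pos_of_pos hK0 _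
    rw [Real.rpow_neg hK0.le, ← div_eq_mul_inv, div_le_one hpos, hcard'] at hle1
    exact hle1
  have hfin : S.Finite := by
    by_contra h
    obtain ⟨T, hTs, hTcard⟩ :=
      Set.Infinite.exists_subset_card_eq h (⌈(K:ℝ) ^ (α * η)⌉₊ + 1)
    have hb := hbound T hTs
    rw [hTcard] at hb
    have h2 := Nat.le_ceil ((K:ℝ) ^ (α * η))
    push_cast at hb
    linarith
  set T := hfin.toFinset with hTdef
  set e := T.equivFin with hedef
  refine ⟨max T.card 1,
    fun x => if h : x ∈ T then Fin.castLE (le_max_left _ _) (e ⟨x, h⟩)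
      else ⟨0, lt_of_lt_of_le Nat.one_pos (le_max_right _ _)⟩,
    fun i => if h : (i : ℕ) < T.card then ((e.symm ⟨i, h⟩ : T) : X) else Classical.arbitrary X,
    le_max_right _ _, ?_, ?_⟩
  · intro x hx
    have hxT : x ∈ T := hfin.mem_toFinset.mpr hx
    simp only [dif_pos hxT]
    have hlt : ((Fin.castLE (le_max_left T.card 1) (e ⟨x, hxT⟩) : Fin (max T.card 1)) : ℕ) < T.card := by
      simp [Fin.coe_castLE]
    rw [dif_pos hlt]
    have : (⟨((Fin.castLE (le_max_left T.card 1) (e ⟨x, hxT⟩) : Fin (max T.card 1)) : ℕ), hlt⟩ : Fin T.card) = e ⟨x, hxT⟩ := by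
      apply Fin.ext; simp
    rw [this, Equiv.symm_apply_apply]
  · rw [Nat.cast_max]
    apply max_le
    · apply hbound
      rw [hTdef, Set.Finite.coe_toFinset]
    · push_cast
      exact Real.one_le_rpow hK1.le hαη

/-- Equivalence theorem, part 2: from ε-achievable overflow thresholds to
ε-achievable fixed-length codes. -/
theorem overflow_to_fixedLength {U : Type*} [Fintype U] (K : ℕ) (hK : 2 ≤ K)
    (hcard : Fintype.card U = K) (c : U → ℝ) (hc : ∀ u, 0 < c u)
    (α : ℝ) (hα : 0 < α) (hroot : ∑ u : U, (K : ℝ) ^ (-(α * c u)) = 1)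
    (𝒳 : ℕ → Type) [∀ n, Countable (𝒳 n)] [∀ n, Nonempty (𝒳 n)]
    (P : ∀ n, 𝒳 n → ℝ) (hP0 : ∀ n x, 0 ≤ P n x) (hP1 : ∀ n, HasSum (P n) 1)
    (η : ℕ → ℝ) (hη : ∀ n, 0 < η n) (ε : ℝ)
    (φ : ∀ n, 𝒳 n → List U)
    (hinj : ∀ n, Function.Injective (φ n)) (hne : ∀ n x, φ n x ≠ [])
    (hpf : ∀ n x y, φ n x <+: φ n y → φ n x = φ n y)
    (hach : Filter.limsup (fun n => prob (P n) {x | η n < strCost c (φ n x)})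
      Filter.atTop ≤ ε) :
    ∃ (M : ℕ → ℕ) (f : ∀ n, 𝒳 n → Fin (M n)) (g : ∀ n, Fin (M n) → 𝒳 n),
      (∀ n, 1 ≤ M n) ∧
      Filter.limsup (fun n => prob (P n) {x | g n (f n x) ≠ x}) Filter.atTop ≤ ε ∧
      Filter.limsup (fun n => Real.logb K (M n) - α * η n) Filter.atTop ≤ 0 := by
  classical
  have hU : Nonempty U := by
    rw [← Fintype.card_pos_iff, hcard]; omega
  have hInh : Inhabited U := Classical.inhabited_of_nonempty hU
  have hK1 : (1:ℝ) < K := by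
    have : (1:ℕ) < K := lt_of_lt_of_le one_lt_two hK
    exact_mod_cast this
  have hex : ∀ n, ∃ (M : ℕ) (f : 𝒳 n → Fin M) (g : Fin M → 𝒳 n), 1 ≤ M ∧
      (∀ x, strCost c (φ n x) ≤ η n → g (f x) = x) ∧ (M : ℝ) ≤ (K:ℝ) ^ (α * η n) :=
    fun n => exists_code K hK c α (η n) hα.le (mul_nonneg hα.le (hη n).le) hroot
      (φ n) (hinj n) (hpf n)
  choose M f g hM hrec hMb using hex
  refine ⟨M, f, g, hM, ?_, ?_⟩
  · -- error probability
    have hsub : ∀ n, {x | g n (f n x) ≠ x} ⊆ {x | η n < strCost c (φ n x)} := by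
      intro n x hx
      by_contra h
      simp only [Set.mem_setOf_eq, not_lt] at h
      exact hx (hrec n x h)
    have hle : ∀ n, prob (P n) {x | g n (f n x) ≠ x}
        ≤ prob (P n) {x | η n < strCost c (φ n x)} := by
      intro n
      apply Summable.tsum_le_tsum
      · intro x
        exact Set.indicator_le_indicator_of_subset (hsub n) (fun a => hP0 n a) x
      · exact Summable.indicator (hP1 n).summable _
      · exact Summable.indicator (hP1 n).summable _
    have hbound1 : ∀ n, prob (P n) {x | η n < strCost c (φ n x)} ≤ 1 := by
      intro n
      calc prob (P n) {x | η n < strCost c (φ n x)} ≤ ∑' x, P n x := by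
            apply Summable.tsum_le_tsum _ (Summable.indicator (hP1 n).summable _) (hP1 n).summable
            intro x
            exact Set.indicator_le_self' (fun a _ => hP0 n a) x
        _ = 1 := (hP1 n).tsum_eq
    have herr0 : ∀ n, 0 ≤ prob (P n) {x | g n (f n x) ≠ x} :=
      fun n => tsum_nonneg (fun x => Set.indicator_nonneg (fun a _ => hP0 n a) x)
    have hll : Filter.limsup (fun n => prob (P n) {x | g n (f n x) ≠ x}) Filter.atTop
        ≤ Filter.limsup (fun n => prob (P n) {x | η n < strCost c (φ n x)}) Filter.atTop := by
      refine Filter.limsup_le_limsup (Filter.Eventually.of_forall hle) ?_ ?_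
      · exact Filter.IsBoundedUnder.isCoboundedUnder_le (Filter.isBoundedUnder_of ⟨0, herr0⟩)
      · exact Filter.isBoundedUnder_of ⟨1, hbound1⟩
    exact hll.trans hach
  · -- length bound
    have hpt : ∀ n, Real.logb K (M n) - α * η n ≤ 0 := by
      intro n
      have hM1 : (1:ℝ) ≤ (M n : ℝ) := by exact_mod_cast hM n
      have h1 : Real.logb K (M n) ≤ Real.logb K ((K:ℝ) ^ (α * η n)) :=
        Real.logb_le_logb_of_le hK1 (by linarith) (hMb n)
      rw [Real.logb_rpow (by linarith) (by linarith)] at h1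
      linarith
    rw [Filter.limsup_eq]
    by_cases hb : BddBelow {a | ∀ᶠ n in Filter.atTop, Real.logb K (M n) - α * η n ≤ a}
    · exact csInf_le hb (Filter.Eventually.of_forall hpt)
    · rw [Real.sInf_of_not_bddBelow hb]
end

section
/- Let the mixed source X be defined by P_{X^n}(x) = w(1)P_{X₁^n}(x) + w(2)P_{X₂^n}(x) with w(1), w(2) > 0. For i ∈ {1,2} and any real sequence {z_n} and any positive sequence γ_n → 0 with √n·γ_n → ∞: (a) Pr[ −log P_{X^n}(X_i^n)/√n ≥ z_n ] ≥ Pr[ −log P_{X_i^n}(X_i^n)/√n ≥ z_n + γ_n ] − e^{−√n γ_n}, and (b) Pr[ −log P_{X^n}(X_i^n)/√n ≥ z_n ] ≤ Pr[ −log P_{X_i^n}(X_i^n)/√n ≥ z_n − γ_n ]. -/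
private lemma prob_nonneg' {X : Type*} {f : X → ℝ} (hf0 : ∀ x, 0 ≤ f x) (S : Set X) :
    0 ≤ prob f S :=
  tsum_nonneg fun x => Set.indicator_nonneg (fun y _ => hf0 y) x

private lemma prob_mono' {X : Type*} {f : X → ℝ} (hf0 : ∀ x, 0 ≤ f x) (hf : Summable f)
    {S T : Set X} (h : ∀ x, 0 < f x → x ∈ S → x ∈ T) : prob f S ≤ prob f T := by
  refine Summable.tsum_le_tsum (fun x => ?_) (hf.indicator S) (hf.indicator T)
  by_cases hxS : x ∈ S
  · rcases lt_or_eq_of_le (hf0 x) with hpos | heq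
    · rw [Set.indicator_of_mem hxS, Set.indicator_of_mem (h x hpos hxS)]
    · rw [Set.indicator_of_mem hxS, ← heq]
      exact Set.indicator_nonneg (fun y _ => hf0 y) x
  · rw [Set.indicator_of_notMem hxS]
    exact Set.indicator_nonneg (fun y _ => hf0 y) x

private lemma prob_le_one' {X : Type*} {f : X → ℝ} (hf0 : ∀ x, 0 ≤ f x) (hf : HasSum f 1)
    (S : Set X) : prob f S ≤ 1 := by
  have := Summable.tsum_le_tsum (Set.indicator_le_self' (fun x _ => hf0 x))
    (hf.summable.indicator S) hf.summable
  simpa [prob, hf.tsum_eq] using this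

private lemma prob_split' {X : Type*} {f : X → ℝ} (hf0 : ∀ x, 0 ≤ f x) (hf : Summable f)
    (S A : Set X) : prob f S ≤ prob f (S ∩ A) + prob f (S ∩ Aᶜ) := by
  have key : ∀ x, S.indicator f x ≤ (S ∩ A).indicator f x + (S ∩ Aᶜ).indicator f x := by
    intro x
    by_cases hxS : x ∈ S
    · by_cases hxA : x ∈ A
      · rw [Set.indicator_of_mem hxS, Set.indicator_of_mem (Set.mem_inter hxS hxA),
          Set.indicator_of_notMem (fun h => h.2 hxA)]
        simp
      · rw [Set.indicator_of_mem hxS, Set.indicator_of_mem (Set.mem_inter hxS (Set.mem_compl hxA)),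
          Set.indicator_of_notMem (fun h => hxA h.2)]
        simp
    · rw [Set.indicator_of_notMem hxS]
      exact add_nonneg (Set.indicator_nonneg (fun y _ => hf0 y) x)
        (Set.indicator_nonneg (fun y _ => hf0 y) x)
  calc prob f S ≤ ∑' x, ((S ∩ A).indicator f x + (S ∩ Aᶜ).indicator f x) :=
        Summable.tsum_le_tsum key (hf.indicator S) ((hf.indicator _).add (hf.indicator _))
    _ = prob f (S ∩ A) + prob f (S ∩ Aᶜ) :=
        Summable.tsum_add (hf.indicator _) (hf.indicator _)

/-- Mixture-comparison lemma: the information spectrum of the mixed source is bounded by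
the spectrum of each component source. -/
theorem mixture_spectrum_lemma (𝒳 : ℕ → Type*) [∀ n, Countable (𝒳 n)]
    (P₁ P₂ : ∀ n, 𝒳 n → ℝ)
    (hP₁0 : ∀ n x, 0 ≤ P₁ n x) (hP₁1 : ∀ n, HasSum (P₁ n) 1)
    (hP₂0 : ∀ n x, 0 ≤ P₂ n x) (hP₂1 : ∀ n, HasSum (P₂ n) 1)
    (w₁ w₂ : ℝ) (hw₁ : 0 < w₁) (hw₂ : 0 < w₂) (hw : w₁ + w₂ = 1)
    (P : ∀ n, 𝒳 n → ℝ) (hP : ∀ n x, P n x = w₁ * P₁ n x + w₂ * P₂ n x)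
    (Q : ∀ n, 𝒳 n → ℝ) (hQ : Q = P₁ ∨ Q = P₂)
    (z : ℕ → ℝ) (γ : ℕ → ℝ) (hγpos : ∀ n, 0 < γ n)
    (hγ0 : Filter.Tendsto γ Filter.atTop (nhds 0))
    (hγtop : Filter.Tendsto (fun n : ℕ => Real.sqrt n * γ n) Filter.atTop Filter.atTop) :
    (∀ n : ℕ,
      prob (Q n) {x | z n + γ n ≤ -Real.log (Q n x) / Real.sqrt n}
          - Real.exp (-(Real.sqrt n * γ n))
        ≤ prob (Q n) {x | z n ≤ -Real.log (P n x) / Real.sqrt n}) ∧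
    (∀ᶠ n : ℕ in Filter.atTop,
      prob (Q n) {x | z n ≤ -Real.log (P n x) / Real.sqrt n}
        ≤ prob (Q n) {x | z n - γ n ≤ -Real.log (Q n x) / Real.sqrt n}) := by
  -- basic facts
  have hP0 : ∀ n x, 0 ≤ P n x := fun n x => by
    rw [hP n x]
    exact add_nonneg (mul_nonneg hw₁.le (hP₁0 n x)) (mul_nonneg hw₂.le (hP₂0 n x))
  have hPsum : ∀ n, HasSum (P n) 1 := fun n => by
    have h := ((hP₁1 n).mul_left w₁).add ((hP₂1 n).mul_left w₂)
    have : (fun x => w₁ * P₁ n x + w₂ * P₂ n x) = P n := by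
      funext x; rw [hP n x]
    rw [this] at h
    simpa [hw] using h
  have hQ0 : ∀ n x, 0 ≤ Q n x := by
    rcases hQ with rfl | rfl
    exacts [hP₁0, hP₂0]
  have hQ1 : ∀ n, HasSum (Q n) 1 := by
    rcases hQ with rfl | rfl
    exacts [hP₁1, hP₂1]
  obtain ⟨wq, hwq0, hwqle⟩ : ∃ wq : ℝ, 0 < wq ∧ ∀ n x, wq * Q n x ≤ P n x := by
    rcases hQ with rfl | rfl
    · exact ⟨w₁, hw₁, fun n x => by
        rw [hP n x]; nlinarith [hP₂0 n x, hw₂.le]⟩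
    · exact ⟨w₂, hw₂, fun n x => by
        rw [hP n x]; nlinarith [hP₁0 n x, hw₁.le]⟩
  constructor
  · -- part (a)
    intro n
    set s : ℝ := Real.sqrt n with hs
    rcases Nat.eq_zero_or_pos n with rfl | hn
    · -- n = 0 : sqrt 0 = 0, exp 0 = 1, prob ≤ 1
      have h1 : prob (Q 0) {x | z 0 + γ 0 ≤ -Real.log (Q 0 x) / s} ≤ 1 :=
        prob_le_one' (hQ0 0) (hQ1 0) _
      have h2 : (0:ℝ) ≤ prob (Q 0) {x | z 0 ≤ -Real.log (P 0 x) / s} :=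
        prob_nonneg' (hQ0 0) _
      have hexp : Real.exp (-(s * γ 0)) = 1 := by
        rw [hs]; norm_num
      rw [hexp]
      linarith
    · have hspos : 0 < s := by
        rw [hs]
        exact Real.sqrt_pos.mpr (by exact_mod_cast hn)
      set A : Set (𝒳 n) := {x | z n ≤ -Real.log (P n x) / s} with hA
      set B : Set (𝒳 n) := {x | z n + γ n ≤ -Real.log (Q n x) / s} with hB
      have hsplit := prob_split' (hQ0 n) (hQ1 n).summable B A
      have hBA : prob (Q n) (B ∩ A) ≤ prob (Q n) A :=
        prob_mono' (hQ0 n) (hQ1 n).summable fun x _ hx => hx.2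
      have hBAc : prob (Q n) (B ∩ Aᶜ) ≤ Real.exp (-(s * γ n)) := by
        have key : ∀ x, (B ∩ Aᶜ).indicator (Q n) x ≤ Real.exp (-(s * γ n)) * P n x := by
          intro x
          by_cases hx : x ∈ B ∩ Aᶜ
          · rw [Set.indicator_of_mem hx]
            rcases lt_or_eq_of_le (hQ0 n x) with hQpos | heq
            · have hPpos : 0 < P n x := lt_of_lt_of_le (mul_pos hwq0 hQpos) (hwqle n x)
              have hxB : z n + γ n ≤ -Real.log (Q n x) / s := hx.1
              have hxA : -Real.log (P n x) / s < z n := not_le.mp hx.2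
              have h1 : (z n + γ n) * s ≤ -Real.log (Q n x) := (le_div_iff₀ hspos).mp hxB
              have h2 : -Real.log (P n x) < z n * s := (div_lt_iff₀ hspos).mp hxA
              have hQub : Q n x ≤ Real.exp (-((z n + γ n) * s)) := by
                rw [← Real.exp_log hQpos]
                exact Real.exp_le_exp.mpr (by linarith)
              have hPlb : Real.exp (-(z n * s)) ≤ P n x := by
                rw [← Real.exp_log hPpos]
                exact Real.exp_le_exp.mpr (by linarith)
              calc Q n x ≤ Real.exp (-((z n + γ n) * s)) := hQub
                _ = Real.exp (-(s * γ n)) * Real.exp (-(z n * s)) := by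
                    rw [← Real.exp_add]; ring_nf
                _ ≤ Real.exp (-(s * γ n)) * P n x := by
                    exact mul_le_mul_of_nonneg_left hPlb (Real.exp_nonneg _)
            · rw [← heq]
              exact mul_nonneg (Real.exp_nonneg _) (hP0 n x)
          · rw [Set.indicator_of_notMem hx]
            exact mul_nonneg (Real.exp_nonneg _) (hP0 n x)
        calc prob (Q n) (B ∩ Aᶜ) ≤ ∑' x, Real.exp (-(s * γ n)) * P n x :=
              Summable.tsum_le_tsum key ((hQ1 n).summable.indicator _)
                ((hPsum n).summable.mul_left _)
          _ = Real.exp (-(s * γ n)) * ∑' x, P n x := tsum_mul_left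
          _ = Real.exp (-(s * γ n)) := by rw [(hPsum n).tsum_eq, mul_one]
      have : prob (Q n) B ≤ prob (Q n) A + Real.exp (-(s * γ n)) := by linarith
      linarith
  · -- part (b)
    have h1 : ∀ᶠ n : ℕ in Filter.atTop, -Real.log wq ≤ Real.sqrt n * γ n :=
      hγtop.eventually_ge_atTop _
    have h2 : ∀ᶠ n : ℕ in Filter.atTop, 1 ≤ n := Filter.eventually_ge_atTop 1
    filter_upwards [h1, h2] with n hlog hn
    have hspos : 0 < Real.sqrt n := Real.sqrt_pos.mpr (by exact_mod_cast hn)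
    set s : ℝ := Real.sqrt n
    refine prob_mono' (hQ0 n) (hQ1 n).summable fun x hQpos hx => ?_
    have hwQpos : 0 < wq * Q n x := by positivity
    have hPge : wq * Q n x ≤ P n x := hwqle n x
    have hlogP : Real.log wq + Real.log (Q n x) ≤ Real.log (P n x) := by
      rw [← Real.log_mul (ne_of_gt hwq0) (ne_of_gt hQpos)]
      exact Real.log_le_log hwQpos hPge
    have hx' : z n ≤ -Real.log (P n x) / s := hx
    -- -log P ≤ -log wq - log Q ≤ s*γ - log Q
    have key : -Real.log (P n x) ≤ s * γ n + -Real.log (Q n x) := by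
      have : -Real.log (P n x) ≤ -Real.log wq + -Real.log (Q n x) := by linarith
      linarith
    have : -Real.log (P n x) / s ≤ γ n + -Real.log (Q n x) / s := by
      rw [div_le_iff₀ hspos]
      have h3 : (γ n + -Real.log (Q n x) / s) * s = s * γ n + (-Real.log (Q n x) / s) * s := by
        ring
      rw [h3, div_mul_cancel₀ _ (ne_of_gt hspos)]
      exact key
    show z n - γ n ≤ -Real.log (Q n x) / s
    linarith
end
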